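/- For matrix pairs (A_1, B_1) and (A_2, B_2) with controllability matrices C_i = [B_i, A_iB_i, …, A_i^{n-1}B_i], the following holds for every h ∈ ℝ: rank [C_2, e^{A_2 h} C_1] ≤ rank [C_2, C_1]. -/

import Mathlib

open NormedSpace Matrix

/-- The exponential of a matrix lies in the span of its powers. -/
lemma exp_mem_span_pow {N : ℕ} (M : Matrix (Fin N) (Fin N) ℝ) :
    exp M ∈ Submodule.span ℝ (Set.range fun k : ℕ => M ^ k) := by
  letI : SeminormedRing (Matrix (Fin N) (Fin N) ℝ) := Matrix.linftyOpSemiNormedRing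
  letI : NormedRing (Matrix (Fin N) (Fin N) ℝ) := Matrix.linftyOpNormedRing
  letI : NormedAlgebra ℝ (Matrix (Fin N) (Fin N) ℝ) := Matrix.linftyOpNormedAlgebra
  set T := Submodule.span ℝ (Set.range fun k : ℕ => M ^ k)
  have hclosed : IsClosed (T : Set (Matrix (Fin N) (Fin N) ℝ)) :=
    Submodule.closed_of_finiteDimensional T
  have hs : HasSum (fun k => expSeries ℝ _ k fun _ => M) (exp M) :=
    expSeries_hasSum_exp M
  refine hclosed.mem_of_tendsto hs (Filter.Eventually.of_forall fun s => ?_)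
  refine T.sum_mem fun k _ => ?_
  rw [expSeries_apply_eq]
  exact T.smul_mem _ (Submodule.subset_span ⟨k, rfl⟩)

lemma range_fromColumns_mulVecLin {N : ℕ} {p q : Type*} [Fintype p] [Fintype q]
    (X : Matrix (Fin N) p ℝ) (Y : Matrix (Fin N) q ℝ) :
    LinearMap.range (Matrix.fromCols X Y).mulVecLin =
      LinearMap.range X.mulVecLin ⊔ LinearMap.range Y.mulVecLin := by
  apply le_antisymm
  · rintro _ ⟨w, rfl⟩
    rw [Matrix.mulVecLin_apply, ← Sum.elim_comp_inl_inr w,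
      Matrix.fromCols_mulVec_sumElim]
    exact Submodule.add_mem _ (Submodule.mem_sup_left ⟨_, rfl⟩)
      (Submodule.mem_sup_right ⟨_, rfl⟩)
  · rw [sup_le_iff]
    constructor
    · rintro _ ⟨u, rfl⟩
      exact ⟨Sum.elim u 0, by simp [Matrix.fromCols_mulVec_sumElim]⟩
    · rintro _ ⟨v, rfl⟩
      exact ⟨Sum.elim 0 v, by simp [Matrix.fromCols_mulVec_sumElim]⟩

lemma pow_card_eq_sum {N : ℕ} (A : Matrix (Fin N) (Fin N) ℝ) :
    A ^ N = ∑ i ∈ Finset.range N, (-(A.charpoly.coeff i)) • A ^ i := by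
  have h0 := Matrix.aeval_self_charpoly A
  rw [Polynomial.aeval_eq_sum_range, Matrix.charpoly_natDegree_eq_dim,
    Fintype.card_fin, Finset.sum_range_succ] at h0
  have hc : A.charpoly.coeff N = 1 := by
    have := A.charpoly_monic.coeff_natDegree
    rwa [Matrix.charpoly_natDegree_eq_dim, Fintype.card_fin] at this
  rw [hc, one_smul] at h0
  have h1 : A ^ N = -∑ x ∈ Finset.range N, A.charpoly.coeff x • A ^ x := by
    have := neg_eq_of_add_eq_zero_left h0
    linear_combination (norm := module) -this
  rw [h1, ← Finset.sum_neg_distrib]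
  exact Finset.sum_congr rfl fun i _ => (neg_smul _ _).symm

/-- The controllability matrix `C = [B, AB, …, A^{n-1}B]` (columns indexed by `Fin n × Fin m`). -/
def ctrlMat {n m : ℕ} (A : Matrix (Fin n) (Fin n) ℝ) (B : Matrix (Fin n) (Fin m) ℝ) :
    Matrix (Fin n) (Fin n × Fin m) ℝ :=
  fun i p => (A ^ (p.1 : ℕ) * B) i p.2

/-- For every `h ∈ ℝ`, `rank [C₂, e^{A₂h}C₁] ≤ rank [C₂, C₁]`. -/
theorem rank_exp_concat_le {n m₁ m₂ : ℕ}
    (A₁ : Matrix (Fin n) (Fin n) ℝ) (B₁ : Matrix (Fin n) (Fin m₁) ℝ)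
    (A₂ : Matrix (Fin n) (Fin n) ℝ) (B₂ : Matrix (Fin n) (Fin m₂) ℝ) (h : ℝ) :
    (Matrix.fromCols (ctrlMat A₂ B₂)
        (NormedSpace.exp (h • A₂) * ctrlMat A₁ B₁)).rank ≤
      (Matrix.fromCols (ctrlMat A₂ B₂) (ctrlMat A₁ B₁)).rank := by
  set C₁ := ctrlMat A₁ B₁ with hC₁
  set C₂ := ctrlMat A₂ B₂ with hC₂def
  set E := exp (h • A₂) with hE
  set F := exp (-(h • A₂)) with hF
  have hEdet : IsUnit E.det := (Matrix.isUnit_iff_isUnit_det E).mp (Matrix.isUnit_exp _)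
  have hFdet : IsUnit F.det := (Matrix.isUnit_iff_isUnit_det F).mp (Matrix.isUnit_exp _)
  have hFE : F * E = 1 := by
    rw [hF, Matrix.exp_neg, ← hE]
    exact Matrix.nonsing_inv_mul E hEdet
  -- S : the column space of C₂
  set S := LinearMap.range C₂.mulVecLin with hSdef
  have hS : S = Submodule.span ℝ (Set.range C₂ᵀ) := Matrix.range_mulVecLin _
  have col_mem : ∀ (k : ℕ), k < n → ∀ j : Fin m₂,
      (fun i => (A₂ ^ k * B₂) i j) ∈ S := by
    intro k hk j
    rw [hS]
    exact Submodule.subset_span ⟨(⟨k, hk⟩, j), rfl⟩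
  have Sinv : ∀ x ∈ S, A₂ *ᵥ x ∈ S := by
    have hle : Submodule.span ℝ (Set.range C₂ᵀ) ≤ S.comap A₂.mulVecLin := by
      rw [Submodule.span_le]
      rintro _ ⟨⟨k, j⟩, rfl⟩
      simp only [SetLike.mem_coe, Submodule.mem_comap, Matrix.mulVecLin_apply]
      have hcol : A₂ *ᵥ C₂ᵀ (k, j) = fun i => (A₂ ^ ((k : ℕ) + 1) * B₂) i j := by
        ext i
        simp only [hC₂def, ctrlMat, Matrix.mulVec, dotProduct, Matrix.transpose_apply,
          Matrix.mul_apply, pow_succ', Finset.mul_sum]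
        rw [Finset.sum_comm]
        simp [Finset.sum_mul, mul_assoc]
      rw [hcol]
      rcases lt_or_ge ((k : ℕ) + 1) n with hlt | hge
      · exact col_mem _ hlt j
      · have hkn : (k : ℕ) + 1 = n := le_antisymm k.isLt hge
        have heq : (fun i => (A₂ ^ n * B₂) i j) =
            ∑ l ∈ Finset.range n,
              (-(A₂.charpoly.coeff l)) • (fun i => (A₂ ^ l * B₂) i j) := by
          ext i
          rw [pow_card_eq_sum, Matrix.sum_mul]
          simp [Matrix.sum_apply, Matrix.smul_mul, Finset.sum_apply]
        rw [hkn, heq]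
        exact Submodule.sum_mem _ fun l hl =>
          Submodule.smul_mem _ _ (col_mem l (Finset.mem_range.mp hl) j)
    intro x hx
    rw [hS] at hx
    simpa using hle hx
  have powInv : ∀ (k : ℕ), ∀ x ∈ S, A₂ ^ k *ᵥ x ∈ S := by
    intro k
    induction k with
    | zero => intro x hx; simp only [pow_zero, Matrix.one_mulVec]; exact hx
    | succ k ih =>
      intro x hx
      rw [pow_succ, ← Matrix.mulVec_mulVec]
      exact ih _ (Sinv x hx)
  have Pinv : ∀ P ∈ Submodule.span ℝ (Set.range fun k : ℕ => A₂ ^ k),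
      ∀ x ∈ S, P *ᵥ x ∈ S := by
    intro P hP
    induction hP using Submodule.span_induction with
    | mem P hPm =>
      obtain ⟨k, rfl⟩ := hPm
      exact powInv k
    | zero => intro x _; simpa [Matrix.zero_mulVec] using S.zero_mem
    | add P Q _ _ ihP ihQ =>
      intro x hx
      rw [Matrix.add_mulVec]
      exact S.add_mem (ihP x hx) (ihQ x hx)
    | smul c P _ ihP =>
      intro x hx
      rw [Matrix.smul_mulVec]
      exact S.smul_mem c (ihP x hx)
  have hFmem : F ∈ Submodule.span ℝ (Set.range fun k : ℕ => A₂ ^ k) := by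
    have h1 := exp_mem_span_pow (-(h • A₂))
    refine Submodule.span_le.mpr ?_ h1
    rintro _ ⟨k, rfl⟩
    simp only [SetLike.mem_coe]
    rw [← neg_smul, smul_pow]
    exact Submodule.smul_mem _ _ (Submodule.subset_span ⟨k, rfl⟩)
  -- rank equality via multiplication by invertible F
  have step1 : (Matrix.fromCols C₂ (E * C₁)).rank =
      (Matrix.fromCols (F * C₂) C₁).rank := by
    rw [← Matrix.rank_mul_eq_right_of_isUnit_det F _ hFdet, Matrix.mul_fromCols,
      ← Matrix.mul_assoc, hFE, Matrix.one_mul]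
  rw [step1]
  -- compare column spaces
  have hsub : LinearMap.range (F * C₂).mulVecLin ≤ S := by
    rintro _ ⟨v, rfl⟩
    rw [Matrix.mulVecLin_apply, ← Matrix.mulVec_mulVec]
    exact Pinv F hFmem _ ⟨v, rfl⟩
  unfold Matrix.rank
  rw [range_fromColumns_mulVecLin, range_fromColumns_mulVecLin]
  exact Submodule.finrank_mono (sup_le_sup_right hsub _)
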